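/- The graph Δ is a strictly Deza graph with parameters (243,22,2,1): Δ has 243 vertices, is 22-regular, any two distinct vertices of Δ have exactly 1 or exactly 2 common neighbours, Δ has diameter 2, and Δ is not strongly regular (there is no pair (λ,μ) making Δ strongly regular with parameters (243,22,λ,μ)). -/

import Mathlib

open SimpleGraph Polynomial Matrix

/-- `V` is the 5-dimensional vector space over `GF(3)`. -/
abbrev V : Type := Fin 5 → ZMod 3

/-- The specific parity-check matrix of the ternary Golay code. -/
def H : Matrix (Fin 5) (Fin 11) (ZMod 3) :=
  !![1,1,1,2,2,0,1,0,0,0,0;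
     1,1,2,1,0,2,0,1,0,0,0;
     1,2,1,0,1,2,0,0,1,0,0;
     1,2,0,1,2,1,0,0,0,1,0;
     1,0,2,2,1,1,0,0,0,0,1]

/-- `S₂ = {±x₁, …, ±x₁₁}` where `x₁, …, x₁₁` are the columns of `H`. -/
def S2 : Set V := {v | ∃ j : Fin 11, v = (fun i => H i j) ∨ v = -(fun i => H i j)}

instance : DecidablePred (· ∈ S2) := fun v =>
  decidable_of_iff (∃ j : Fin 11, v = (fun i => H i j) ∨ v = -(fun i => H i j)) Iff.rfl

/-- The reversal map sending `(a,b,c,d,e)` to `(e,d,c,b,a)`. -/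
def r (v : V) : V := fun i => v i.rev

lemma r_r (v : V) : r (r v) = v := funext fun i => by simp [r, Fin.rev_rev]

lemma r_sub (a b : V) : r (a - b) = r a - r b := rfl

lemma S2_neg : ∀ v ∈ S2, -v ∈ S2 := by
  rintro v ⟨j, h | h⟩
  · exact ⟨j, Or.inr (by rw [h])⟩
  · exact ⟨j, Or.inl (by rw [h, neg_neg])⟩

lemma S2_r : ∀ v ∈ S2, r v ∈ S2 := by
  have base : ∀ j : Fin 11, r (fun i => H i j) ∈ S2 := by decide
  rintro v ⟨j, h | h⟩
  · rw [h]; exact base j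
  · rw [h]
    have hneg : r (-(fun i => H i j)) = -(r (fun i => H i j)) := rfl
    rw [hneg]; exact S2_neg _ (base j)

set_option maxRecDepth 40000 in
lemma sub_r_not_mem : ∀ v : V, v - r v ∉ S2 := by decide

/-- The graph `Δ` obtained from `Γ = Cay(V, S₂)` by dual Seidel switching with respect to
the reversal involution `r`: `u` is adjacent to `v` iff `r u ≠ v` and `r u - v ∈ S₂`. -/
def Δ : SimpleGraph V where
  Adj u v := r u ≠ v ∧ r u - v ∈ S2
  symm := ⟨by
    rintro u v ⟨h1, h2⟩
    refine ⟨fun h => h1 ?_, ?_⟩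
    · rw [← h, r_r]
    · have key : r v - u = -(r (r u - v)) := by
        rw [r_sub, r_r]; abel
      rw [key]
      exact S2_neg _ (S2_r _ h2)⟩
  loopless := ⟨fun v h => sub_r_not_mem (r v) (by rw [r_r]; exact h.2)⟩

instance : DecidableRel Δ.Adj := fun u v =>
  decidable_of_iff (r u ≠ v ∧ r u - v ∈ S2) Iff.rfl


/-! ### Auxiliary machinery -/

/-- Explicit list of the 22 elements of `S2`. -/
def S2list : List V := [![1,1,1,1,1], ![1,1,2,2,0], ![1,2,1,0,2], ![2,1,0,1,2], ![2,0,1,2,1],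
  ![0,2,2,1,1], ![1,0,0,0,0], ![0,1,0,0,0], ![0,0,1,0,0], ![0,0,0,1,0], ![0,0,0,0,1],
  ![2,2,2,2,2], ![2,2,1,1,0], ![2,1,2,0,1], ![1,2,0,2,1], ![1,0,2,1,2], ![0,1,1,2,2],
  ![2,0,0,0,0], ![0,2,0,0,0], ![0,0,2,0,0], ![0,0,0,2,0], ![0,0,0,0,2]]

/-- Base-3 encoding of vectors as natural numbers. -/
def e (v : V) : ℕ := (v 0).val + 3*(v 1).val + 9*(v 2).val + 27*(v 3).val + 81*(v 4).val

/-- Digitwise (base-3) subtraction on codes. -/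
def csub (a b : ℕ) : ℕ :=
  (a % 3 + 3 - b % 3) % 3 + 3 * ((a / 3 % 3 + 3 - b / 3 % 3) % 3)
  + 9 * ((a / 9 % 3 + 3 - b / 9 % 3) % 3) + 27 * ((a / 27 % 3 + 3 - b / 27 % 3) % 3)
  + 81 * ((a / 81 % 3 + 3 - b / 81 % 3) % 3)

/-- Codes of the elements of `S2`. -/
def S2codes : List ℕ := [121, 76, 178, 194, 146, 132, 1, 3, 9, 27, 81, 242, 44, 104, 142,
  208, 228, 2, 6, 18, 54, 162]

/-- Number of `s ∈ S2` with `s - d ∈ S2`, computed on codes. -/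
def NNc (c : ℕ) : ℕ := (S2codes.filter (fun a => decide (csub a c ∈ S2codes))).length

set_option maxRecDepth 1000000 in
set_option maxHeartbeats 4000000 in
lemma NNc_values : ∀ c < 243, c ≠ 0 → NNc c = 1 ∨ NNc c = 2 := by decide

lemma digits_e (v : V) : (e v) % 3 = (v 0).val ∧ (e v) / 3 % 3 = (v 1).val
    ∧ (e v) / 9 % 3 = (v 2).val ∧ (e v) / 27 % 3 = (v 3).val ∧ (e v) / 81 % 3 = (v 4).val := by
  have hv : ∀ i, (v i).val < 3 := fun i => ZMod.val_lt _
  have v0 := hv 0; have v1 := hv 1; have v2 := hv 2; have v3 := hv 3; have v4 := hv 4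
  simp only [e]
  refine ⟨by omega, by omega, by omega, by omega, by omega⟩

lemma val_sub : ∀ (x y : ZMod 3), (x - y).val = (x.val + 3 - y.val) % 3 := by decide

lemma e_sub_eq (u v : V) : e (u - v) = csub (e u) (e v) := by
  obtain ⟨a0, a1, a2, a3, a4⟩ := digits_e u
  obtain ⟨b0, b1, b2, b3, b4⟩ := digits_e v
  have h : ∀ i, ((u - v) i).val = ((u i).val + 3 - (v i).val) % 3 := fun i => val_sub (u i) (v i)
  rw [csub, a0, a1, a2, a3, a4, b0, b1, b2, b3, b4]
  simp only [e, h 0, h 1, h 2, h 3, h 4]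

lemma e_inj : Function.Injective e := by
  intro u v h
  obtain ⟨a0, a1, a2, a3, a4⟩ := digits_e u
  obtain ⟨b0, b1, b2, b3, b4⟩ := digits_e v
  funext i
  apply ZMod.val_injective
  fin_cases i
  · show (u 0).val = (v 0).val; rw [← a0, ← b0, h]
  · show (u 1).val = (v 1).val; rw [← a1, ← b1, h]
  · show (u 2).val = (v 2).val; rw [← a2, ← b2, h]
  · show (u 3).val = (v 3).val; rw [← a3, ← b3, h]
  · show (u 4).val = (v 4).val; rw [← a4, ← b4, h]

lemma e_lt (v : V) : e v < 243 := by
  have hv : ∀ i, (v i).val < 3 := fun i => ZMod.val_lt _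
  have v0 := hv 0; have v1 := hv 1; have v2 := hv 2; have v3 := hv 3; have v4 := hv 4
  simp only [e]; omega

lemma e_zero : e (0 : V) = 0 := by decide

set_option maxRecDepth 100000 in
lemma mem_S2_list : ∀ v : V, v ∈ S2 ↔ v ∈ S2list := by decide

lemma S2list_map : S2list.map e = S2codes := by decide

lemma S2codes_nodup : S2codes.Nodup := by decide

lemma S2list_nodup : S2list.Nodup := by decide

lemma mem_code (v : V) : v ∈ S2 ↔ e v ∈ S2codes := by
  rw [mem_S2_list, ← S2list_map, List.mem_map]
  constructor
  · intro h; exact ⟨v, h, rfl⟩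
  · rintro ⟨w, hw, he⟩; rwa [← e_inj he]

/-- Number of `s ∈ S2` with `s - d ∈ S2`. -/
def NN (d : V) : ℕ := (Finset.univ.filter (fun s : V => s ∈ S2 ∧ s - d ∈ S2)).card

lemma NN_eq_code (d : V) : NN d = NNc (e d) := by
  classical
  have hnodup : (S2codes.filter (fun a => decide (csub a (e d) ∈ S2codes))).Nodup :=
    S2codes_nodup.filter _
  rw [NN, NNc, ← List.toFinset_card_of_nodup hnodup]
  apply Finset.card_nbij (i := e)
  · intro s hs
    simp only [Finset.mem_coe, Finset.mem_filter, Finset.mem_univ, true_and] at hs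
    simp only [Finset.mem_coe, List.mem_toFinset, List.mem_filter, decide_eq_true_eq]
    exact ⟨(mem_code s).mp hs.1, by rw [← e_sub_eq]; exact (mem_code _).mp hs.2⟩
  · exact fun a _ b _ h => e_inj h
  · intro c hc
    simp only [Finset.coe_filter, Finset.mem_coe, List.coe_toFinset, Set.mem_setOf_eq,
      List.mem_filter, decide_eq_true_eq] at hc
    obtain ⟨hc1, hc2⟩ := hc
    rw [← S2list_map, List.mem_map] at hc1
    obtain ⟨s, hs, rfl⟩ := hc1
    refine ⟨s, ?_, rfl⟩
    simp only [Finset.coe_filter, Finset.mem_univ, true_and, Set.mem_setOf_eq]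
    refine ⟨(mem_S2_list s).mpr hs, (mem_code _).mpr ?_⟩
    rwa [e_sub_eq]

lemma zero_not_mem_S2 : (0 : V) ∉ S2 := by decide

lemma adj_iff (u v : V) : Δ.Adj u v ↔ r u - v ∈ S2 := by
  constructor
  · exact fun h => h.2
  · intro h
    refine ⟨fun he => zero_not_mem_S2 ?_, h⟩
    rwa [← he, sub_self] at h

lemma NN_values : ∀ d : V, d ≠ 0 → NN d = 1 ∨ NN d = 2 := by
  intro d hd
  rw [NN_eq_code]
  refine NNc_values (e d) (e_lt d) (fun h => hd ?_)
  exact e_inj (h.trans e_zero.symm)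

lemma card_common (u v : V) :
    Fintype.card (Δ.commonNeighbors u v) = NN (r u - r v) := by
  classical
  have h1 : Fintype.card (Δ.commonNeighbors u v)
      = (Finset.univ.filter (fun w : V => Δ.Adj u w ∧ Δ.Adj v w)).card := by
    rw [← Fintype.card_subtype]
    exact Fintype.card_congr (Equiv.refl _)
  rw [h1, NN]
  apply Finset.card_nbij' (fun w => r u - w) (fun s => r u - s)
  · intro w hw
    simp only [Finset.mem_coe, Finset.mem_filter, Finset.mem_univ, true_and] at hw ⊢
    obtain ⟨hw1, hw2⟩ := hw
    refine ⟨(adj_iff u w).mp hw1, ?_⟩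
    have h2 : r u - w - (r u - r v) = r v - w := by abel
    rw [h2]
    exact (adj_iff v w).mp hw2
  · intro s hs
    simp only [Finset.mem_coe, Finset.mem_filter, Finset.mem_univ, true_and] at hs ⊢
    obtain ⟨hs1, hs2⟩ := hs
    refine ⟨(adj_iff u _).mpr (by rwa [sub_sub_cancel]), (adj_iff v _).mpr ?_⟩
    have h2 : r v - (r u - s) = s - (r u - r v) := by abel
    rw [h2]; exact hs2
  · intro w _; exact sub_sub_cancel _ _
  · intro s _; exact sub_sub_cancel _ _

lemma r_injective : Function.Injective r := fun a b h => by
  rw [← r_r a, h, r_r]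

lemma delta_regular : Δ.IsRegularOfDegree 22 := by
  intro u
  have hcard : (Finset.univ.filter (fun s : V => s ∈ S2)).card = 22 := by
    have heq : (Finset.univ.filter (fun s : V => s ∈ S2)) = S2list.toFinset := by
      ext s
      simp [mem_S2_list s, List.mem_toFinset]
    rw [heq, List.toFinset_card_of_nodup S2list_nodup]
    rfl
  rw [SimpleGraph.degree, ← hcard]
  apply Finset.card_nbij' (fun w => r u - w) (fun s => r u - s)
  · intro w hw
    simp only [Finset.mem_coe, SimpleGraph.mem_neighborFinset] at hw
    simp only [Finset.mem_coe, Finset.mem_filter, Finset.mem_univ, true_and]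
    exact (adj_iff u w).mp hw
  · intro s hs
    simp only [Finset.mem_coe, Finset.mem_filter, Finset.mem_univ, true_and] at hs
    simp only [Finset.mem_coe, SimpleGraph.mem_neighborFinset]
    exact (adj_iff u _).mpr (by rwa [sub_sub_cancel])
  · intro w _; exact sub_sub_cancel _ _
  · intro s _; exact sub_sub_cancel _ _

lemma common_card (u v : V) (huv : u ≠ v) :
    Fintype.card (Δ.commonNeighbors u v) = 1 ∨ Fintype.card (Δ.commonNeighbors u v) = 2 := by
  rw [card_common]
  apply NN_values
  intro h
  exact huv (r_injective (by rwa [sub_eq_zero] at h))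

lemma edist_le_two (u v : V) : Δ.edist u v ≤ 2 := by
  rcases eq_or_ne u v with rfl | huv
  · simp [SimpleGraph.edist_eq_zero_iff.mpr rfl]
  by_cases hadj : Δ.Adj u v
  · calc Δ.edist u v = 1 := SimpleGraph.edist_eq_one_iff_adj.mpr hadj
    _ ≤ 2 := by norm_num
  · have hpos : 0 < Fintype.card (Δ.commonNeighbors u v) := by
      rcases common_card u v huv with h | h <;> omega
    obtain ⟨⟨w, hw⟩⟩ := Fintype.card_pos_iff.mp hpos
    obtain ⟨hw1, hw2⟩ := hw
    have hw1' : Δ.Adj u w := hw1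
    have hw2' : Δ.Adj v w := hw2
    have hle := SimpleGraph.edist_le
      (SimpleGraph.Walk.cons hw1' (SimpleGraph.Walk.cons hw2'.symm SimpleGraph.Walk.nil))
    simpa using hle

lemma exists_far : ¬ Δ.Adj ![0,0,0,0,1] ![0,0,0,0,2] ∧ (![0,0,0,0,1] : V) ≠ ![0,0,0,0,2] := by
  constructor
  · rw [adj_iff]; decide
  · decide

lemma delta_ediam : Δ.ediam = 2 := by
  apply le_antisymm
  · exact SimpleGraph.ediam_le_of_edist_le edist_le_two
  · have h := exists_far
    have h0 : Δ.edist ![0,0,0,0,1] ![0,0,0,0,2] ≠ 0 :=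
      fun hc => h.2 (SimpleGraph.edist_eq_zero_iff.mp hc)
    have h1 : Δ.edist ![0,0,0,0,1] ![0,0,0,0,2] ≠ 1 :=
      fun hc => h.1 (SimpleGraph.edist_eq_one_iff_adj.mp hc)
    have h2 : 2 ≤ Δ.edist ![0,0,0,0,1] ![0,0,0,0,2] := by
      rcases eq_or_ne (Δ.edist ![0,0,0,0,1] ![0,0,0,0,2]) ⊤ with ht | ht
      · rw [ht]; exact le_top
      · lift Δ.edist ![0,0,0,0,1] ![0,0,0,0,2] to ℕ using ht with n hn
        have hn0 : n ≠ 0 := by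
          intro hc; apply h0; rw [hc]; rfl
        have hn1 : n ≠ 1 := by
          intro hc; apply h1; rw [hc]; rfl
        exact_mod_cast (by omega : 2 ≤ n)
    exact le_trans h2 SimpleGraph.edist_le_ediam

lemma adj1 : Δ.Adj 0 ![1,2,0,2,1] := by rw [adj_iff]; decide
lemma adj2 : Δ.Adj ![0,0,0,0,1] ![0,0,1,2,1] := by rw [adj_iff]; decide

lemma NN1 : NN (r 0 - r ![1,2,0,2,1]) = 1 := by rw [NN_eq_code]; decide
lemma NN2 : NN (r ![0,0,0,0,1] - r ![0,0,1,2,1]) = 2 := by rw [NN_eq_code]; decide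

lemma card_V : Fintype.card V = 243 := by
  rw [show (243 : ℕ) = 3 ^ 5 by norm_num]
  rw [Fintype.card_fun]
  simp [ZMod.card]

/-- `Δ` is a strictly Deza graph with parameters `(243, 22, 2, 1)`: it has 243 vertices,
is 22-regular, any two distinct vertices have exactly 1 or exactly 2 common neighbours,
it has diameter 2, and it is not strongly regular. -/
theorem delta_is_strictly_deza :
    Fintype.card V = 243 ∧
    Δ.IsRegularOfDegree 22 ∧
    (∀ u v : V, u ≠ v →
      Fintype.card (Δ.commonNeighbors u v) = 1 ∨ Fintype.card (Δ.commonNeighbors u v) = 2) ∧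
    Δ.diam = 2 ∧
    ¬ ∃ ℓ μ : ℕ, Δ.IsSRGWith 243 22 ℓ μ := by
  refine ⟨card_V, delta_regular, common_card, ?_, ?_⟩
  · rw [SimpleGraph.diam, delta_ediam]; rfl
  · rintro ⟨ℓ, μ, hsrg⟩
    have h1 := hsrg.of_adj _ _ adj1
    have h2 := hsrg.of_adj _ _ adj2
    rw [card_common, NN1] at h1
    rw [card_common, NN2] at h2
    omega
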